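/- (Three-distance theorem) For any irrational α and any positive integer n, the points {0}, {α}, {2α}, …, {(n-1)α} partition the circle ℝ/ℤ into arcs whose lengths take at most three distinct values. -/

import Mathlib

/-- The points `{k·α}` for `0 ≤ k < n` on the circle `ℝ/ℤ`,
represented by their fractional parts in `[0,1)`. -/
def scalePoints (α : ℝ) (n : ℕ) : Set ℝ :=
  {x | ∃ k < n, x = Int.fract (k * α)}

/-- The gap (arc length, in the positive direction) from a point `x`
to the next point of `S` on the circle of circumference 1. -/
noncomputable def gapOf (S : Set ℝ) (x : ℝ) : ℝ :=
  sInf ((fun y => Int.fract (y - x)) '' (S \ {x}))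

/-- The set of gap lengths between circularly consecutive points
among `{k·α}`, `0 ≤ k < n`. -/
noncomputable def gapSet (α : ℝ) (n : ℕ) : Set ℝ :=
  (fun x => gapOf (scalePoints α n) x) '' scalePoints α n

lemma fract_sub_fract' (a b : ℝ) :
    Int.fract (Int.fract a - Int.fract b) = Int.fract (a - b) := by
  have h : Int.fract a - Int.fract b = (a - b) - ((⌊a⌋ - ⌊b⌋ : ℤ) : ℝ) := by
    rw [Int.fract, Int.fract]; push_cast; ring
  rw [h, Int.fract_sub_intCast]

section helpers
variable {α : ℝ} (hα : Irrational α)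
include hα

lemma frac_pos' {m : ℤ} (hm : m ≠ 0) : 0 < Int.fract ((m : ℝ) * α) := by
  rcases (Int.fract_nonneg ((m : ℝ) * α)).lt_or_eq with h | h
  · exact h
  · exfalso
    have hirr : Irrational ((m : ℝ) * α) := hα.intCast_mul hm
    have h2 : (m : ℝ) * α - ⌊(m : ℝ) * α⌋ = 0 := by
      have := h.symm; rwa [Int.fract] at this
    exact hirr.ne_int ⌊(m : ℝ) * α⌋ (by linarith)

lemma beta_inj' {a b : ℤ} (h : a ≠ b) :
    Int.fract ((a : ℝ) * α) ≠ Int.fract ((b : ℝ) * α) := by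
  intro he
  have h1 := fract_sub_fract' ((a : ℝ) * α) ((b : ℝ) * α)
  rw [he, sub_self, Int.fract_zero] at h1
  have h2 : (a : ℝ) * α - (b : ℝ) * α = ((a - b : ℤ) : ℝ) * α := by push_cast; ring
  rw [h2] at h1
  exact absurd h1.symm (ne_of_gt (frac_pos' hα (sub_ne_zero.2 h)))

omit hα in
lemma beta_sub' {a b : ℤ}
    (h : Int.fract ((b : ℝ) * α) < Int.fract ((a : ℝ) * α)) :
    Int.fract ((a : ℝ) * α) - Int.fract ((b : ℝ) * α)
      = Int.fract (((a - b : ℤ) : ℝ) * α) := by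
  have h1 := fract_sub_fract' ((a : ℝ) * α) ((b : ℝ) * α)
  have hself : Int.fract (Int.fract ((a : ℝ) * α) - Int.fract ((b : ℝ) * α))
      = Int.fract ((a : ℝ) * α) - Int.fract ((b : ℝ) * α) := by
    apply Int.fract_eq_self.2
    constructor
    · linarith
    · have := Int.fract_lt_one ((a : ℝ) * α)
      have := Int.fract_nonneg ((b : ℝ) * α)
      linarith
  rw [hself] at h1
  rw [h1]
  congr 1
  push_cast; ring

lemma beta_neg' {m : ℤ} (hm : m ≠ 0) :
    Int.fract (((-m : ℤ) : ℝ) * α) = 1 - Int.fract ((m : ℝ) * α) := by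
  have h : ((-m : ℤ) : ℝ) * α = -((m : ℝ) * α) := by push_cast; ring
  rw [h, Int.fract_neg (ne_of_gt (frac_pos' hα hm))]

omit hα in
/-- integer-index description of `scalePoints`. -/
lemma scale_mem_int {n : ℕ} {x : ℝ} :
    x ∈ scalePoints α n ↔ ∃ m : ℤ, 0 ≤ m ∧ m < (n : ℤ) ∧ x = Int.fract ((m : ℝ) * α) := by
  constructor
  · rintro ⟨k, hk, rfl⟩
    exact ⟨(k : ℤ), by positivity, by exact_mod_cast hk, by push_cast; ring_nf⟩
  · rintro ⟨m, h0, hn, rfl⟩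
    refine ⟨m.toNat, ?_, ?_⟩
    · omega
    · congr 2
      exact_mod_cast (Int.toNat_of_nonneg h0).symm

end helpers

/-- **Three-distance theorem**: for irrational `α` and `n ≥ 1`, the points
`{kα}`, `0 ≤ k < n`, cut the circle into arcs of at most three distinct lengths. -/
theorem three_distance (α : ℝ) (hα : Irrational α) (n : ℕ) (hn : 0 < n) :
    (gapSet α n).ncard ≤ 3 := by
  rcases eq_or_lt_of_le (show 1 ≤ n from hn) with h1 | h2
  · -- n = 1
    have hn1 : n = 1 := h1.symm
    subst hn1
    have hS : scalePoints α 1 = {Int.fract ((0 : ℕ) * α)} := by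
      ext x
      constructor
      · rintro ⟨k, hk, rfl⟩
        interval_cases k
        rfl
      · rintro rfl
        exact ⟨0, by norm_num, rfl⟩
    have hgap : gapSet α 1 = {gapOf (scalePoints α 1) (Int.fract ((0 : ℕ) * α))} := by
      rw [gapSet, hS, Set.image_singleton]
    rw [hgap]
    simp [Set.ncard_singleton]
  · -- n ≥ 2
    set N : ℤ := (n : ℤ) - 1 with hNdef
    have hN1 : 1 ≤ N := by omega
    set β : ℤ → ℝ := fun m => Int.fract ((m : ℝ) * α) with hβ
    have hIne : (Finset.Icc (1 : ℤ) N).Nonempty := ⟨1, by simp [hN1]⟩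
    obtain ⟨p, hpI, hpmin⟩ := (Finset.Icc (1 : ℤ) N).exists_min_image β hIne
    obtain ⟨q, hqI, hqmax⟩ := (Finset.Icc (1 : ℤ) N).exists_max_image β hIne
    rw [Finset.mem_Icc] at hpI hqI
    set dp : ℝ := β p with hdp
    set dm : ℝ := 1 - β q with hdm
    have hp0 : p ≠ 0 := by omega
    have hq0 : q ≠ 0 := by omega
    have hdp_pos : 0 < dp := frac_pos' hα hp0
    have hdm_pos : 0 < dm := by
      have := Int.fract_lt_one ((q : ℝ) * α)
      simp only [hdm, hβ]
      linarith
    have hpos_lb : ∀ m : ℤ, 1 ≤ m → m ≤ N → dp ≤ β m := fun m h1 h2 =>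
      hpmin m (Finset.mem_Icc.2 ⟨h1, h2⟩)
    have hneg_lb : ∀ m : ℤ, 1 ≤ m → m ≤ N → dm ≤ β (-m) := by
      intro m h1 h2
      have : β (-m) = 1 - β m := beta_neg' hα (by omega)
      rw [this]
      have := hqmax m (Finset.mem_Icc.2 ⟨h1, h2⟩)
      simp only [hdm]
      linarith
    have L2 : ∀ m : ℤ, 1 ≤ m → m < p → dp + dm ≤ β m := by
      intro m h1 h2
      have hmp : β p < β m :=
        lt_of_le_of_ne (hpos_lb m h1 (by omega)) (beta_inj' hα (by omega))
      have hsub : β m - β p = β (m - p) := beta_sub' hmp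
      have hmpneg : β (m - p) = 1 - β (p - m) := by
        have : m - p = -(p - m) := by ring
        rw [this]
        exact beta_neg' hα (by omega)
      have hqm : β (p - m) ≤ β q := hqmax _ (Finset.mem_Icc.2 ⟨by omega, by omega⟩)
      simp only [hdp, hdm]
      linarith [hsub, hmpneg]
    have L1 : ∀ m : ℤ, 1 ≤ m → m < q → dp + dm ≤ β (-m) := by
      intro m h1 h2
      have hmq : β m < β q :=
        lt_of_le_of_ne (hqmax m (Finset.mem_Icc.2 ⟨h1, by omega⟩)) (beta_inj' hα (by omega))
      have hsub : β q - β m = β (q - m) := beta_sub' hmq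
      have hneg : β (-m) = 1 - β m := beta_neg' hα (by omega)
      have hqm : dp ≤ β (q - m) := hpos_lb _ (by omega) (by omega)
      simp only [hdp, hdm] at *
      linarith
    -- the image set computation
    have image_eq : ∀ k : ℤ, 0 ≤ k → k ≤ N →
        ((fun y => Int.fract (y - Int.fract ((k : ℝ) * α))) ''
          (scalePoints α n \ {Int.fract ((k : ℝ) * α)}))
        = β '' {m : ℤ | -k ≤ m ∧ m ≤ N - k ∧ m ≠ 0} := by
      intro k hk0 hkN
      ext x
      constructor
      · rintro ⟨y, ⟨hyS, hyx⟩, rfl⟩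
        obtain ⟨j, hj0, hjn, rfl⟩ := (scale_mem_int).1 hyS
        have hjk : j ≠ k := by
          intro h
          exact hyx (by rw [h]; rfl)
        refine ⟨j - k, ⟨by omega, by omega, by omega⟩, ?_⟩
        have h2 : ((j - k : ℤ) : ℝ) * α = (j : ℝ) * α - (k : ℝ) * α := by push_cast; ring
        simp only [hβ, h2]
        rw [← fract_sub_fract']
      · rintro ⟨m, ⟨hm1, hm2, hm3⟩, rfl⟩
        refine ⟨Int.fract (((m + k : ℤ) : ℝ) * α), ⟨?_, ?_⟩, ?_⟩
        · exact scale_mem_int.2 ⟨m + k, by omega, by omega, rfl⟩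
        · simp only [Set.mem_singleton_iff]
          exact beta_inj' hα (by omega)
        · have h2 : ((m : ℤ) : ℝ) * α = ((m + k : ℤ) : ℝ) * α - (k : ℝ) * α := by
            push_cast; ring
          simp only [hβ]
          rw [fract_sub_fract', ← h2]
    -- key computation of each gap
    have key : ∀ k : ℤ, 0 ≤ k → k ≤ N →
        gapOf (scalePoints α n) (Int.fract ((k : ℝ) * α)) ∈
          ({dp, dm, dp + dm} : Set ℝ) := by
      intro k hk0 hkN
      rw [gapOf, image_eq k hk0 hkN]
      set D : Set ℤ := {m : ℤ | -k ≤ m ∧ m ≤ N - k ∧ m ≠ 0} with hD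
      have hbdd : BddBelow (β '' D) := by
        refine ⟨0, ?_⟩
        rintro x ⟨m, _, rfl⟩
        exact Int.fract_nonneg _
      have hinf_eq : ∀ v : ℝ, v ∈ β '' D → (∀ x ∈ β '' D, v ≤ x) → sInf (β '' D) = v := by
        intro v hv hlb
        exact le_antisymm (csInf_le hbdd hv) (le_csInf ⟨v, hv⟩ hlb)
      set s : ℤ := N - k with hs
      have hsk : s + k = N := by omega
      by_cases hps : p ≤ s
      · by_cases hqk : q ≤ k
        · -- both p and -q available
          rcases le_total dp dm with hmin | hmin
          · left
            apply hinf_eq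
            · exact ⟨p, ⟨by omega, by omega, hp0⟩, rfl⟩
            · rintro x ⟨m, ⟨h1, h2, h3⟩, rfl⟩
              rcases lt_or_gt_of_ne h3 with hm | hm
              · have : β m = β (-(-m)) := by rw [neg_neg]
                rw [this]
                have := hneg_lb (-m) (by omega) (by omega)
                linarith
              · exact hpos_lb m (by omega) (by omega)
          · right; left
            apply hinf_eq
            · refine ⟨-q, ⟨by omega, by omega, by omega⟩, ?_⟩
              exact (beta_neg' hα hq0).trans rfl
            · rintro x ⟨m, ⟨h1, h2, h3⟩, rfl⟩
              rcases lt_or_gt_of_ne h3 with hm | hm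
              · have : β m = β (-(-m)) := by rw [neg_neg]
                rw [this]
                exact hneg_lb (-m) (by omega) (by omega)
              · have := hpos_lb m (by omega) (by omega)
                linarith
        · -- p available, all negatives < q
          left
          apply hinf_eq
          · exact ⟨p, ⟨by omega, by omega, hp0⟩, rfl⟩
          · rintro x ⟨m, ⟨h1, h2, h3⟩, rfl⟩
            rcases lt_or_gt_of_ne h3 with hm | hm
            · have : β m = β (-(-m)) := by rw [neg_neg]
              rw [this]
              have := L1 (-m) (by omega) (by omega)
              linarith
            · exact hpos_lb m (by omega) (by omega)
      · by_cases hqk : q ≤ k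
        · -- -q available, all positives < p
          right; left
          apply hinf_eq
          · refine ⟨-q, ⟨by omega, by omega, by omega⟩, ?_⟩
            exact (beta_neg' hα hq0).trans rfl
          · rintro x ⟨m, ⟨h1, h2, h3⟩, rfl⟩
            rcases lt_or_gt_of_ne h3 with hm | hm
            · have : β m = β (-(-m)) := by rw [neg_neg]
              rw [this]
              exact hneg_lb (-m) (by omega) (by omega)
            · have := L2 m (by omega) (by omega)
              linarith
        · -- s < p and k < q : gap is dp + dm
          right; right
          have hlb : ∀ x ∈ β '' D, dp + dm ≤ x := by
            rintro x ⟨m, ⟨h1, h2, h3⟩, rfl⟩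
            rcases lt_or_gt_of_ne h3 with hm | hm
            · have : β m = β (-(-m)) := by rw [neg_neg]
              rw [this]
              exact L1 (-m) (by omega) (by omega)
            · exact L2 m (by omega) (by omega)
          -- show dp + dm < 1
          have hDne : ∃ m : ℤ, m ∈ D := by
            by_cases h1s : 1 ≤ s
            · exact ⟨1, by simp only [hD, Set.mem_setOf_eq]; omega⟩
            · exact ⟨-1, by simp only [hD, Set.mem_setOf_eq]; omega⟩
          obtain ⟨m₀, hm₀⟩ := hDne
          have hlt1 : dp + dm < 1 := by
            have hx := hlb (β m₀) ⟨m₀, hm₀, rfl⟩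
            have := Int.fract_lt_one ((m₀ : ℝ) * α)
            simp only [hβ] at hx ⊢
            linarith
          have hpq : p ≠ q := by
            intro h
            rw [h] at hdp
            simp only [hdp, hdm] at hlt1
            linarith
          have hbpq : β p < β q :=
            lt_of_le_of_ne (hqmax p (Finset.mem_Icc.2 hpI)) (beta_inj' hα hpq)
          have hattain : β (p - q) = dp + dm := by
            have h1 : ((p - q : ℤ) : ℝ) * α = (p : ℝ) * α - (q : ℝ) * α := by
              push_cast; ring
            have h2 : Int.fract (((p - q : ℤ) : ℝ) * α)
                = Int.fract (β p - β q) := by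
              rw [h1, ← fract_sub_fract']
            have h3 : Int.fract (β p - β q) = Int.fract (β p - β q + 1) := by
              rw [← Int.fract_add_intCast (β p - β q) 1]; norm_num
            have h4 : Int.fract (β p - β q + 1) = β p - β q + 1 := by
              apply Int.fract_eq_self.2
              constructor
              · have := Int.fract_lt_one ((q : ℝ) * α)
                have := Int.fract_nonneg ((p : ℝ) * α)
                simp only [hβ] at *
                linarith
              · linarith
            simp only [hβ] at h2 h3 h4 ⊢
            rw [h2, h3, h4]
            simp only [hdp, hdm, hβ]
            ring
          apply hinf_eq
          · exact ⟨p - q, ⟨by omega, by omega, by omega⟩, hattain⟩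
          · exact hlb
    -- gapSet is contained in the triple
    have hsub : gapSet α n ⊆ {dp, dm, dp + dm} := by
      rintro g ⟨x, hxS, rfl⟩
      obtain ⟨m, hm0, hmn, rfl⟩ := scale_mem_int.1 hxS
      exact key m hm0 (by omega)
    calc (gapSet α n).ncard ≤ ({dp, dm, dp + dm} : Set ℝ).ncard :=
          Set.ncard_le_ncard hsub (Set.toFinite _)
      _ ≤ ({dm, dp + dm} : Set ℝ).ncard + 1 := Set.ncard_insert_le _ _
      _ ≤ (({dp + dm} : Set ℝ).ncard + 1) + 1 := by
          have := Set.ncard_insert_le dm ({dp + dm} : Set ℝ)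
          omega
      _ ≤ 3 := by rw [Set.ncard_singleton]
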